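/- For integers a > 0 and 0 ≤ b ≤ a, the coefficients satisfy c·m_{a,b} = (a-b)·m_{a-1,b} − b·m_{a-1,b-1} + E, where E = −c/(e^c−1) if b = 0, E = c·e^c/(e^c−1) if a = b, and E = 0 otherwise (with the convention m_{a,b} = 0 if a or b is negative). -/

import Mathlib

open MeasureTheory Real Finset

noncomputable def mcoef (c : ℝ) (a b : ℤ) : ℝ :=
  if a < 0 ∨ b < 0 then 0
  else ∫ p in (0:ℝ)..1,
    (c * Real.exp (c * p) / (Real.exp c - 1)) * p ^ b.toNat * (1 - p) ^ (a - b).toNat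

noncomputable def harm (k : ℕ) : ℝ := ∑ t ∈ Finset.range k, (1 : ℝ) / (t + 1)

noncomputable def gfun (c : ℝ) {U : Type*} [DecidableEq U] (f : Finset U → ℝ)
    (A : Finset U) : ℝ :=
  ∑ B ∈ A.powerset, mcoef c ((A.card : ℤ) - 1) ((B.card : ℤ) - 1) * f B

noncomputable def Jint (c : ℝ) (B A : ℕ) : ℝ :=
  ∫ p in (0:ℝ)..1, Real.exp (c * p) * p ^ B * (1 - p) ^ A

lemma J_key (c : ℝ) (B A : ℕ) :
    c * Jint c B A = (A : ℝ) * Jint c B (A - 1) - (B : ℝ) * Jint c (B - 1) A +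
      (Real.exp c * (if A = 0 then 1 else 0) - (if B = 0 then 1 else 0)) := by
  have hderiv : ∀ p ∈ Set.uIcc (0:ℝ) 1,
      HasDerivAt (fun p => Real.exp (c * p) * (p ^ B * (1 - p) ^ A))
        (c * (Real.exp (c * p) * p ^ B * (1 - p) ^ A)
          + (B : ℝ) * (Real.exp (c * p) * p ^ (B - 1) * (1 - p) ^ A)
          - (A : ℝ) * (Real.exp (c * p) * p ^ B * (1 - p) ^ (A - 1))) p := by
    intro p _
    have hE : HasDerivAt (fun p : ℝ => Real.exp (c * p)) (Real.exp (c * p) * c) p := by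
      simpa using ((hasDerivAt_id p).const_mul c).exp
    have hP : HasDerivAt (fun p : ℝ => p ^ B) ((B : ℝ) * p ^ (B - 1)) p :=
      hasDerivAt_pow B p
    have hQ : HasDerivAt (fun p : ℝ => (1 - p) ^ A)
        ((A : ℝ) * (1 - p) ^ (A - 1) * (-1)) p :=
      (hasDerivAt_pow A (1 - p)).comp p ((hasDerivAt_id p).const_sub 1)
    have h : HasDerivAt (fun p => Real.exp (c * p) * (p ^ B * (1 - p) ^ A))
        (Real.exp (c * p) * c * (p ^ B * (1 - p) ^ A) + Real.exp (c * p) * ((B : ℝ) * p ^ (B - 1) * (1 - p) ^ A + p ^ B * ((A : ℝ) * (1 - p) ^ (A - 1) * (-1)))) p :=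
      hE.mul (hP.mul hQ)
    convert h using 1
    ring
  have hint1 : IntervalIntegrable
      (fun p : ℝ => Real.exp (c * p) * p ^ B * (1 - p) ^ A) volume 0 1 :=
    (by fun_prop : Continuous fun p : ℝ => Real.exp (c * p) * p ^ B * (1 - p) ^ A).intervalIntegrable 0 1
  have hint2 : IntervalIntegrable
      (fun p : ℝ => Real.exp (c * p) * p ^ (B - 1) * (1 - p) ^ A) volume 0 1 :=
    (by fun_prop : Continuous fun p : ℝ => Real.exp (c * p) * p ^ (B - 1) * (1 - p) ^ A).intervalIntegrable 0 1
  have hint3 : IntervalIntegrable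
      (fun p : ℝ => Real.exp (c * p) * p ^ B * (1 - p) ^ (A - 1)) volume 0 1 :=
    (by fun_prop : Continuous fun p : ℝ => Real.exp (c * p) * p ^ B * (1 - p) ^ (A - 1)).intervalIntegrable 0 1
  have hFTC := intervalIntegral.integral_eq_sub_of_hasDerivAt hderiv
    (((hint1.const_mul c).add (hint2.const_mul (B : ℝ))).sub (hint3.const_mul (A : ℝ)))
  rw [intervalIntegral.integral_sub ((hint1.const_mul c).add (hint2.const_mul (B : ℝ)))
        (hint3.const_mul (A : ℝ)),
      intervalIntegral.integral_add (hint1.const_mul c) (hint2.const_mul (B : ℝ)),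
      intervalIntegral.integral_const_mul, intervalIntegral.integral_const_mul,
      intervalIntegral.integral_const_mul] at hFTC
  have hb1 : ((1:ℝ) ^ B * (1 - 1) ^ A) = (if A = 0 then 1 else 0) := by
    simp [zero_pow_eq]
  have hb0 : ((0:ℝ) ^ B * (1 - 0) ^ A) = (if B = 0 then 1 else 0) := by
    simp [zero_pow_eq]
  rw [show c * (1:ℝ) = c by ring, show c * (0:ℝ) = 0 by ring] at hFTC
  rw [Real.exp_zero] at hFTC
  rw [hb1, hb0] at hFTC
  unfold Jint
  linarith [hFTC]

lemma mcoef_eq (c : ℝ) {a b : ℤ} (ha : 0 ≤ a) (hb : 0 ≤ b) :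
    mcoef c a b = c / (Real.exp c - 1) * Jint c b.toNat (a - b).toNat := by
  rw [mcoef, if_neg (by omega), Jint, ← intervalIntegral.integral_const_mul]
  apply intervalIntegral.integral_congr
  intro p _
  dsimp only
  ring

theorem stmt_1 (c : ℝ) (hc0 : 0 < c) (hc1 : c ≤ 1) (a b : ℤ)
    (ha : 0 < a) (hb0 : 0 ≤ b) (hba : b ≤ a) :
    c * mcoef c a b =
      (a - b : ℝ) * mcoef c (a - 1) b - (b : ℝ) * mcoef c (a - 1) (b - 1) +
      (if b = 0 then -c / (Real.exp c - 1)
       else if a = b then c * Real.exp c / (Real.exp c - 1)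
       else 0) := by
  have key := J_key c b.toNat (a - b).toNat
  have h1 : mcoef c a b = c / (Real.exp c - 1) * Jint c b.toNat (a - b).toNat :=
    mcoef_eq c ha.le hb0
  have e2 : (a - 1 - b).toNat = (a - b).toNat - 1 := by omega
  have h2 : mcoef c (a - 1) b
      = c / (Real.exp c - 1) * Jint c b.toNat ((a - b).toNat - 1) := by
    rw [mcoef_eq c (by omega) hb0, e2]
  have hbR : (b : ℝ) = (b.toNat : ℝ) := by exact_mod_cast (Int.toNat_of_nonneg hb0).symm
  have habR : (a : ℝ) - (b : ℝ) = ((a - b).toNat : ℝ) := by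
    exact_mod_cast (Int.toNat_of_nonneg (by omega : (0:ℤ) ≤ a - b)).symm
  by_cases hb : b = 0
  · subst hb
    have hA : (a - 0).toNat ≠ 0 := by omega
    have hmz : mcoef c (a - 1) (0 - 1) = 0 := by
      rw [mcoef, if_pos (Or.inr (by norm_num))]
    rw [if_pos rfl, h1, h2, hmz, habR]
    simp only [if_neg hA, Int.toNat_zero, eq_self_iff_true, if_true, Nat.cast_zero] at key ⊢
    linear_combination (c / (Real.exp c - 1)) * key
  · have hB : b.toNat ≠ 0 := by omega
    have h3 : mcoef c (a - 1) (b - 1)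
        = c / (Real.exp c - 1) * Jint c (b.toNat - 1) (a - b).toNat := by
      rw [mcoef_eq c (by omega) (by omega)]
      have e3 : (b - 1).toNat = b.toNat - 1 := by omega
      have e4 : (a - 1 - (b - 1)).toNat = (a - b).toNat := by omega
      rw [e3, e4]
    by_cases hab : a = b
    · have hA : (a - b).toNat = 0 := by omega
      rw [if_neg hb, if_pos hab, h1, h2, h3, habR, hbR]
      simp only [hA, eq_self_iff_true, if_true, if_neg hB, Nat.cast_zero] at key ⊢
      linear_combination (c / (Real.exp c - 1)) * key
    · have hA : (a - b).toNat ≠ 0 := by omega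
      rw [if_neg hb, if_neg hab, h1, h2, h3]
      simp only [if_neg hA, if_neg hB] at key
      rw [habR, hbR] at *
      linear_combination (c / (Real.exp c - 1)) * key
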